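/- Let S be an uncountable ω₁-compact subspace of a tree T of height ω₁ and f : S → Y continuous with Y metrizable. Then there exists β < ω₁ such that f is constant on S(x) = {y ∈ S : y ≥ x} whenever x ∈ T has height at least β. In particular, f has countable image. -/

import Mathlib

open Set Topology Cardinal Ordinal

universe u v

/-- The order (interval) topology of a tree. -/
def treeTopology (T : Type u) [PartialOrder T] : TopologicalSpace T :=
  TopologicalSpace.generateFrom
    ({s | ∃ a b : T, a < b ∧ s = Set.Ioc a b} ∪
     {s | ∃ b : T, (∀ a : T, ¬a < b) ∧ s = {b}})

/-- A tree order: the predecessors of every element are well-ordered. -/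
def IsTreeOrder (T : Type u) [PartialOrder T] : Prop :=
  ∀ x : T, IsWellOrder {y : T // y < x} (· < ·)

/-- The height of an element: the order type of its set of predecessors. -/
noncomputable def treeHeight {T : Type u} [PartialOrder T] (hT : IsTreeOrder T) (x : T) :
    Ordinal.{u} :=
  @Ordinal.type {y : T // y < x} (· < ·) (hT x)

/-- Hausdorff tree: elements at limit levels are determined by their predecessors. -/
def IsHausdorffTree (T : Type u) [PartialOrder T] : Prop :=
  ∀ x y : T, Set.Iio x = Set.Iio y → (Set.Iio x).Nonempty →
    (∀ z ∈ Set.Iio x, ∃ w ∈ Set.Iio x, z < w) → x = y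

/-- The tree has height ω₁. -/
def HasHeightOmega1 {T : Type u} [PartialOrder T] (hT : IsTreeOrder T) : Prop :=
  (∀ x : T, treeHeight hT x < ω₁) ∧ ∀ α < ω₁, ∃ x : T, treeHeight hT x = α

/-- Downward closure of a subset of a tree. -/
def downClosure {T : Type u} [PartialOrder T] (S : Set T) : Set T := {x | ∃ y ∈ S, x ≤ y}

/-- `D` is a closed discrete subset of the subspace `S`. -/
def ClosedDiscreteIn {T : Type u} [TopologicalSpace T] (D S : Set T) : Prop :=
  D ⊆ S ∧ closure D ∩ S ⊆ D ∧ ∀ x ∈ D, ∃ U : Set T, IsOpen U ∧ x ∈ U ∧ U ∩ D = {x}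

/-- `S` is ω₁-compact in the subspace topology: every closed discrete subset is countable. -/
def OmegaOneCompactIn {T : Type u} [TopologicalSpace T] (S : Set T) : Prop :=
  ∀ D : Set T, ClosedDiscreteIn D S → D.Countable

/-- A club (closed unbounded) subset of `ω₁` (as a set of ordinals, with the order topology). -/
def IsClubBelowOmega1 (C : Set Ordinal.{u}) : Prop :=
  C ⊆ Set.Iio ω₁ ∧ (∀ α < ω₁, ∃ β ∈ C, α ≤ β) ∧ ∀ α < ω₁, α ∈ closure C → α ∈ C

/-- A stationary subset of `ω₁`. -/
def IsStationaryBelowOmega1 (S : Set Ordinal.{u}) : Prop :=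
  S ⊆ Set.Iio ω₁ ∧ ∀ C : Set Ordinal.{u}, IsClubBelowOmega1 C → (S ∩ C).Nonempty

namespace S15

variable {T : Type u} [PartialOrder T]

theorem tri_below (hT : IsTreeOrder T) {u v w : T} (hu : u < w) (hv : v < w) :
    u < v ∨ u = v ∨ v < u := by
  haveI := hT w
  rcases @trichotomous {y : T // y < w} (· < ·) _ ⟨u, hu⟩ ⟨v, hv⟩ with h | h | h
  · exact Or.inl (Subtype.mk_lt_mk.mp h)
  · exact Or.inr (Or.inl (congrArg Subtype.val h))
  · exact Or.inr (Or.inr (Subtype.mk_lt_mk.mp h))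

theorem tri_below_le (hT : IsTreeOrder T) {u v w : T} (hu : u ≤ w) (hv : v ≤ w) :
    u ≤ v ∨ v ≤ u := by
  rcases eq_or_lt_of_le hu with rfl | hu'
  · exact Or.inr hv
  rcases eq_or_lt_of_le hv with rfl | hv'
  · exact Or.inl hu'.le
  rcases tri_below hT hu' hv' with h | h | h
  · exact Or.inl h.le
  · exact Or.inl h.le
  · exact Or.inr h.le

noncomputable def predSeg (hT : IsTreeOrder T) {u v : T} (h : u < v) :
    @PrincipalSeg {y : T // y < u} {y : T // y < v} (· < ·) (· < ·) :=
  @PrincipalSeg.mk _ _ _ _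
    (RelEmbedding.mk ⟨fun y => ⟨y.1, y.2.trans h⟩,
      fun y z hyz => Subtype.ext (show y.1 = z.1 from congrArg (Subtype.val : {y : T // y < v} → T) hyz)⟩ (fun {a b} => Iff.rfl))
    ⟨u, h⟩
    (by
      intro b
      constructor
      · rintro ⟨a, rfl⟩; exact a.2
      · intro hb; exact ⟨⟨b.1, hb⟩, rfl⟩)

theorem treeHeight_eq_typein (hT : IsTreeOrder T) {u v : T} (h : u < v) :
    treeHeight hT u = @Ordinal.typein {y : T // y < v} (· < ·) (hT v) ⟨u, h⟩ := by
  haveI := hT u; haveI := hT v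
  exact (Ordinal.typein_top (predSeg hT h)).symm

theorem treeHeight_lt_of_lt (hT : IsTreeOrder T) {u v : T} (h : u < v) :
    treeHeight hT u < treeHeight hT v := by
  haveI := hT v
  rw [treeHeight_eq_typein hT h]
  exact @Ordinal.typein_lt_type _ _ (hT v) ⟨u, h⟩

theorem treeHeight_le_of_le (hT : IsTreeOrder T) {u v : T} (h : u ≤ v) :
    treeHeight hT u ≤ treeHeight hT v := by
  rcases eq_or_lt_of_le h with rfl | h'
  · exact le_refl _
  · exact (treeHeight_lt_of_lt hT h').le

theorem lt_of_treeHeight_lt (hT : IsTreeOrder T) {u v w : T} (hu : u ≤ w) (hv : v ≤ w)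
    (h : treeHeight hT u < treeHeight hT v) : u < v := by
  rcases tri_below_le hT hu hv with h' | h'
  · rcases eq_or_lt_of_le h' with rfl | h''
    · exact absurd h (lt_irrefl _)
    · exact h''
  · exact absurd (treeHeight_le_of_le hT h') (not_le.mpr h)

theorem eq_of_treeHeight_eq (hT : IsTreeOrder T) {u v w : T} (hu : u ≤ w) (hv : v ≤ w)
    (h : treeHeight hT u = treeHeight hT v) : u = v := by
  rcases tri_below_le hT hu hv with h' | h'
  · rcases eq_or_lt_of_le h' with rfl | h''
    · rfl
    · exact absurd (treeHeight_lt_of_lt hT h'') (by rw [h]; exact lt_irrefl _)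
  · rcases eq_or_lt_of_le h' with rfl | h''
    · rfl
    · exact absurd (treeHeight_lt_of_lt hT h'') (by rw [h]; exact lt_irrefl _)

theorem exists_pred_of_lt (hT : IsTreeOrder T) {s : T} {α : Ordinal.{u}}
    (h : α < treeHeight hT s) : ∃ x, x < s ∧ treeHeight hT x = α := by
  haveI := hT s
  refine ⟨(Ordinal.enum (α := {y : T // y < s}) (· < ·) ⟨α, h⟩).1,
    (Ordinal.enum (α := {y : T // y < s}) (· < ·) ⟨α, h⟩).2, ?_⟩
  rw [treeHeight_eq_typein hT (Ordinal.enum (α := {y : T // y < s}) (· < ·) ⟨α, h⟩).2]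
  exact Ordinal.typein_enum _ h


variable {tT : TopologicalSpace T}

theorem isOpen_Ioc_tree (htop : tT = treeTopology T) {a b : T} (hab : a < b) :
    IsOpen (Set.Ioc a b) := by
  rw [htop]
  exact TopologicalSpace.isOpen_generateFrom_of_mem (Or.inl ⟨a, b, hab, rfl⟩)

theorem isOpen_min_singleton (htop : tT = treeTopology T) {b : T} (hb : ∀ a : T, ¬ a < b) :
    IsOpen ({b} : Set T) := by
  rw [htop]
  exact TopologicalSpace.isOpen_generateFrom_of_mem (Or.inr ⟨b, hb, rfl⟩)

theorem nbhd_of_generateOpen (hT : IsTreeOrder T) {V : Set T}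
    (hV : TopologicalSpace.GenerateOpen
      ({s | ∃ a b : T, a < b ∧ s = Set.Ioc a b} ∪
       {s | ∃ b : T, (∀ a : T, ¬a < b) ∧ s = {b}}) V) :
    ∀ τ ∈ V, (∀ a, ¬ a < τ) ∨ ∃ a, a < τ ∧ Set.Ioc a τ ⊆ V := by
  induction hV with
  | basic s hs =>
    intro τ hτ
    rcases hs with ⟨a, b, hab, rfl⟩ | ⟨b, hb, rfl⟩
    · exact Or.inr ⟨a, hτ.1, fun c hc => ⟨hc.1, hc.2.trans hτ.2⟩⟩
    · left
      rcases hτ with rfl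
      exact hb
  | univ =>
    intro τ _
    by_cases h : ∀ a, ¬ a < τ
    · exact Or.inl h
    · push_neg at h
      obtain ⟨a, ha⟩ := h
      exact Or.inr ⟨a, ha, fun c _ => trivial⟩
  | inter V₁ V₂ h₁ h₂ ih₁ ih₂ =>
    intro τ hτ
    rcases ih₁ τ hτ.1 with hm | ⟨a₁, ha₁, hsub₁⟩
    · exact Or.inl hm
    rcases ih₂ τ hτ.2 with hm | ⟨a₂, ha₂, hsub₂⟩
    · exact Or.inl hm
    rcases tri_below hT ha₁ ha₂ with h | h | h
    · exact Or.inr ⟨a₂, ha₂, fun c hc => ⟨hsub₁ ⟨h.trans hc.1, hc.2⟩, hsub₂ hc⟩⟩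
    · subst h
      exact Or.inr ⟨a₁, ha₁, fun c hc => ⟨hsub₁ hc, hsub₂ hc⟩⟩
    · exact Or.inr ⟨a₁, ha₁, fun c hc => ⟨hsub₁ hc, hsub₂ ⟨h.trans hc.1, hc.2⟩⟩⟩
  | sUnion 𝔖 h ih =>
    intro τ hτ
    obtain ⟨W, hW, hτW⟩ := hτ
    rcases ih W hW τ hτW with hm | ⟨a, ha, hsub⟩
    · exact Or.inl hm
    · exact Or.inr ⟨a, ha, fun c hc => ⟨W, hW, hsub hc⟩⟩

theorem exists_Ioc_subset (hT : IsTreeOrder T) (htop : tT = treeTopology T) {V : Set T}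
    (hV : IsOpen V) {τ : T} (hτ : τ ∈ V) {a₀ : T} (ha₀ : a₀ < τ) :
    ∃ a, a < τ ∧ Set.Ioc a τ ⊆ V := by
  rw [htop] at hV
  rcases nbhd_of_generateOpen hT hV τ hτ with hm | h
  · exact absurd ha₀ (hm a₀)
  · exact h

theorem cont_nbhd {S : Set T} {Y : Type v} [TopologicalSpace Y] {f : S → Y}
    (hf : Continuous f) (hT : IsTreeOrder T) (htop : tT = treeTopology T)
    {τ : T} (hτ : τ ∈ S) {a₀ : T} (ha₀ : a₀ < τ) {O : Set Y} (hO : IsOpen O)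
    (hfO : f ⟨τ, hτ⟩ ∈ O) :
    ∃ a, a < τ ∧ ∀ u (hu : u ∈ S), a < u → u ≤ τ → f ⟨u, hu⟩ ∈ O := by
  have h1 : IsOpen (f ⁻¹' O) := hO.preimage hf
  obtain ⟨V, hVo, hVeq⟩ := isOpen_induced_iff.mp h1
  have hτV : τ ∈ V := by
    have h2 : (⟨τ, hτ⟩ : S) ∈ f ⁻¹' O := hfO
    rw [← hVeq] at h2
    exact h2
  obtain ⟨a, ha, hsub⟩ := exists_Ioc_subset hT htop hVo hτV ha₀
  refine ⟨a, ha, fun u hu hau huτ => ?_⟩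
  have h3 : (⟨u, hu⟩ : S) ∈ Subtype.val ⁻¹' V := hsub ⟨hau, huτ⟩
  rw [hVeq] at h3
  exact h3

theorem lemmaB (hT : IsTreeOrder T) (htop : tT = treeTopology T) {S : Set T}
    (hSc : OmegaOneCompactIn S) {D : Set T} (hDS : D ⊆ S) (hD : ¬ D.Countable) :
    ∃ τ, τ ∈ S ∧ (∃ a, a < τ) ∧ ∀ a, a < τ → ∃ d ∈ D, a < d ∧ d < τ := by
  by_contra hcon
  push_neg at hcon
  apply hD
  apply hSc
  refine ⟨hDS, ?_, ?_⟩
  · rintro s ⟨hscl, hsS⟩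
    by_contra hsD
    by_cases hmin : ∀ a, ¬ a < s
    · obtain ⟨d, hd1, hd2⟩ := (mem_closure_iff.mp hscl) {s} (isOpen_min_singleton htop hmin) rfl
      rcases hd1 with rfl
      exact hsD hd2
    · push_neg at hmin
      obtain ⟨a, ha, hprop⟩ := hcon s hsS hmin
      obtain ⟨d, hd⟩ := (mem_closure_iff.mp hscl) (Set.Ioc a s)
        (isOpen_Ioc_tree htop ha) ⟨ha, le_refl s⟩
      have hds : d < s := lt_of_le_of_ne hd.1.2 (fun h => hsD (h ▸ hd.2))
      exact absurd hds (hprop d hd.2 hd.1.1)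
  · intro x hxD
    by_cases hmin : ∀ a, ¬ a < x
    · refine ⟨{x}, isOpen_min_singleton htop hmin, rfl, ?_⟩
      ext c
      constructor
      · rintro ⟨hc1, _⟩; exact hc1
      · rintro rfl; exact ⟨rfl, hxD⟩
    · push_neg at hmin
      obtain ⟨a, ha, hprop⟩ := hcon x (hDS hxD) hmin
      refine ⟨Set.Ioc a x, isOpen_Ioc_tree htop ha, ⟨ha, le_refl x⟩, ?_⟩
      ext c
      constructor
      · rintro ⟨⟨hac, hcx⟩, hcD⟩
        rcases eq_or_lt_of_le hcx with h | h
        · exact h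
        · exact absurd h (hprop c hcD hac)
      · rintro rfl
        exact ⟨⟨ha, le_refl _⟩, hxD⟩


theorem omega1_cof : (ω₁ : Ordinal.{u}).cof = ℵ₁ := by
  rw [← ord_aleph]
  exact Cardinal.isRegular_aleph_one.cof_eq

theorem succ_lt_omega1 {o : Ordinal.{u}} (h : o < ω₁) : o + 1 < ω₁ := by
  rw [Ordinal.add_one_eq_succ]
  exact (Cardinal.isSuccLimit_omega 1).succ_lt h

theorem card_lt_of_lt_omega1 {o : Ordinal.{u}} (h : o < ω₁) : o.card < ℵ₁ := by
  rw [← ord_aleph] at h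
  exact Cardinal.lt_ord.mp h

theorem nat_sup_lt_omega1 (g : ℕ → Ordinal.{u}) (hg : ∀ n, g n < ω₁) :
    (⨆ n, g n) < ω₁ := by
  rw [← ord_aleph]
  rw [ord_aleph]; exact Ordinal.iSup_lt_omega_one hg

theorem sup_heights_lt (hT : IsTreeOrder T) (hht : HasHeightOmega1 hT) {A : Set T}
    (hA : A.Countable) : ∃ β, β < ω₁ ∧ ∀ t ∈ A, treeHeight hT t < β := by
  rcases A.eq_empty_or_nonempty with rfl | hne
  · exact ⟨1, lt_of_lt_of_le Ordinal.one_lt_omega0 (Ordinal.omega0_le_omega 1),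
      fun t ht => absurd ht (Set.notMem_empty t)⟩
  · obtain ⟨g, hg⟩ := hA.exists_eq_range hne
    refine ⟨(⨆ n, treeHeight hT (g n)) + 1, ?_, ?_⟩
    · exact succ_lt_omega1 (nat_sup_lt_omega1 _ (fun n => hht.1 _))
    · intro t ht
      rw [hg] at ht
      obtain ⟨n, rfl⟩ := ht
      calc treeHeight hT (g n) ≤ ⨆ n, treeHeight hT (g n) := Ordinal.le_iSup (fun n => treeHeight hT (g n)) n
        _ < _ := by rw [Ordinal.add_one_eq_succ]; exact Order.lt_succ _

theorem unbounded_uncountable (hT : IsTreeOrder T) (hht : HasHeightOmega1 hT) {A : Set T}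
    (hA : ∀ β, β < ω₁ → ∃ t ∈ A, β < treeHeight hT t) : ¬ A.Countable := by
  intro hc
  obtain ⟨β, hβ, hb⟩ := sup_heights_lt hT hht hc
  obtain ⟨t, htA, hβt⟩ := hA β hβ
  exact absurd (hb t htA) (not_lt.mpr hβt.le)


section Machine

variable (hT : IsTreeOrder T) {S : Set T}
  {Y : Type v} [MetricSpace Y] (f : S → Y) {ε : ℝ}

/-- A point is `bad` if there are two points of `S` above it with `f`-values more than
`ε` apart. -/
def IsBad (f : S → Y) (ε : ℝ) (x : T) : Prop :=
  ∃ y z : S, x ≤ ↑y ∧ x ≤ ↑z ∧ ε < dist (f y) (f z)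

theorem inner_supply (hht : HasHeightOmega1 hT) (htop : tT = treeTopology T)
    (hSc : OmegaOneCompactIn S)
    (hUnb : ∀ β, β < ω₁ → ∃ x, IsBad f ε x ∧ β < treeHeight hT x)
    {δ : Ordinal.{u}} (hδ : δ < ω₁) :
    ∃ v g : S, δ < treeHeight hT (v : T) ∧ (v : T) < (g : T) ∧
      ε / 2 ≤ dist (f v) (f g) := by
  classical
  have hne : Nonempty S := by
    obtain ⟨x, ⟨y, z, -⟩, -⟩ := hUnb 0 (Ordinal.omega_pos 1)
    exact ⟨y⟩
  -- the property we choose witnesses for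
  set P : Ordinal.{u} → S → Prop := fun d y =>
    ∃ x, IsBad f ε x ∧ x ≤ ↑y ∧ d < treeHeight hT x with hPdef
  have hPex : ∀ d, d < ω₁ → ∃ y, P d y := by
    intro d hd
    obtain ⟨x, hb, hdx⟩ := hUnb d hd
    obtain ⟨y, z, hxy, hxz, hdyz⟩ := hb
    exact ⟨y, x, ⟨y, z, hxy, hxz, hdyz⟩, hxy, hdx⟩
  -- the recursion
  set F : ∀ α : Ordinal.{u}, (∀ β, β < α → S) → S := fun α IH =>
    if h : ∃ y, P (Ordinal.bsup α (fun β hβ => treeHeight hT ((IH β hβ) : T) + 1)) y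
    then h.choose else hne.some with hFdef
  set H : Ordinal.{u} → S := WellFounded.fix Ordinal.lt_wf F with hHdef
  set δf : Ordinal.{u} → Ordinal.{u} :=
    fun α => Ordinal.bsup α (fun β _ => treeHeight hT ((H β) : T) + 1) with hδfdef
  have hHeq : ∀ α : Ordinal.{u},
      H α = if h : ∃ y, P (δf α) y then h.choose else hne.some := by
    intro α
    have := WellFounded.fix_eq Ordinal.lt_wf F α
    rw [hHdef]
    exact this
  have hδflt : ∀ α, α < ω₁ → δf α < ω₁ := by
    intro α hα
    rw [hδfdef, ← ord_aleph]
    apply Ordinal.bsup_lt_ord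
    · rw [Cardinal.isRegular_aleph_one.cof_eq]
      exact card_lt_of_lt_omega1 hα
    · intro i hi
      rw [ord_aleph]
      exact succ_lt_omega1 (hht.1 _)
  have hHspec : ∀ α, α < ω₁ → P (δf α) (H α) := by
    intro α hα
    rw [hHeq α, dif_pos (hPex (δf α) (hδflt α hα))]
    exact (hPex (δf α) (hδflt α hα)).choose_spec
  have hband : ∀ β α : Ordinal.{u}, β < α → treeHeight hT ((H β) : T) < δf α := by
    intro β α h
    have h1 := Ordinal.le_bsup (fun β (_ : β < α) => treeHeight hT ((H β) : T) + 1) β h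
    refine lt_of_lt_of_le ?_ h1
    rw [Ordinal.add_one_eq_succ]
    exact Order.lt_succ _
  have hHht : ∀ α, α < ω₁ → δf α < treeHeight hT ((H α) : T) := by
    intro α hα
    obtain ⟨x, hb, hxy, hdx⟩ := hHspec α hα
    exact lt_of_lt_of_le hdx (treeHeight_le_of_le hT hxy)
  have hδfge : ∀ α, α < ω₁ → α ≤ δf α := by
    intro α
    induction α using Ordinal.induction with
    | _ α IH =>
      intro hα
      by_contra hlt
      push_neg at hlt
      have h2 : δf α < δf α :=
        lt_of_le_of_lt (IH (δf α) hlt (lt_trans hlt hα))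
          (lt_trans (hHht (δf α) (lt_trans hlt hα)) (hband (δf α) α hlt))
      exact absurd h2 (lt_irrefl _)
  -- the uncountable set of chosen points with high indices
  set D : Set T := {t | ∃ α, α < ω₁ ∧ δ < α ∧ t = ((H α) : T)} with hDdef
  have hDS : D ⊆ S := by rintro t ⟨α, -, -, rfl⟩; exact (H α).2
  have hDunc : ¬ D.Countable := by
    apply unbounded_uncountable hT hht
    intro β hβ
    have hα : max β δ + 1 < ω₁ := succ_lt_omega1 (max_lt hβ hδ)
    refine ⟨((H (max β δ + 1)) : T), ⟨max β δ + 1, hα, ?_, rfl⟩, ?_⟩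
    · exact lt_of_le_of_lt (le_max_right β δ) (by
        rw [Ordinal.add_one_eq_succ]; exact Order.lt_succ _)
    · refine lt_of_le_of_lt ?_ (lt_of_le_of_lt (hδfge _ hα) (hHht _ hα))
      exact le_trans (le_max_left β δ) (by
        rw [Ordinal.add_one_eq_succ]; exact (Order.lt_succ _).le)
  obtain ⟨σ, hσS, ⟨a₀', ha₀'⟩, hσ⟩ := lemmaB hT htop hSc hDS hDunc
  -- everything below σ is bad
  have hIio : ∀ u, u < σ → IsBad f ε u := by
    intro u hu
    obtain ⟨d₁, hd₁D, hud₁, hd₁σ⟩ := hσ u hu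
    obtain ⟨d₂, hd₂D, hd₁d₂, hd₂σ⟩ := hσ d₁ hd₁σ
    obtain ⟨α₁, hα₁, -, rfl⟩ := hd₁D
    obtain ⟨α₂, hα₂, -, rfl⟩ := hd₂D
    have hht12 : treeHeight hT ((H α₁) : T) < treeHeight hT ((H α₂) : T) :=
      treeHeight_lt_of_lt hT hd₁d₂
    have hα12 : α₁ < α₂ := by
      by_contra hle
      push_neg at hle
      rcases eq_or_lt_of_le hle with rfl | hlt
      · exact absurd hht12 (lt_irrefl _)
      · exact absurd (lt_trans hht12 (lt_trans (hband α₂ α₁ hlt) (hHht α₁ hα₁)))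
          (lt_irrefl _)
    obtain ⟨x, hxbad, hxle, hdx⟩ := hHspec α₂ hα₂
    have hux : u < x := by
      apply lt_of_treeHeight_lt hT (le_of_lt (lt_trans hud₁ hd₁d₂)) hxle
      calc treeHeight hT u < treeHeight hT ((H α₁) : T) := treeHeight_lt_of_lt hT hud₁
        _ < δf α₂ := hband α₁ α₂ hα12
        _ < treeHeight hT x := hdx
    obtain ⟨y, z, h1, h2, h3⟩ := hxbad
    exact ⟨y, z, (le_of_lt hux).trans h1, (le_of_lt hux).trans h2, h3⟩
  -- pick v below σ with height > δ
  obtain ⟨v1, hv1D, hav1, hv1σ⟩ := hσ a₀' ha₀'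
  obtain ⟨α, hα, hδα, rfl⟩ := hv1D
  have hvht : δ < treeHeight hT ((H α) : T) :=
    lt_trans hδα (lt_of_le_of_lt (hδfge α hα) (hHht α hα))
  -- pick a bad point strictly above v, below σ
  obtain ⟨d₂, hd₂D, hv1d₂, hd₂σ⟩ := hσ _ hv1σ
  obtain ⟨y, z, hy, hz, hdist⟩ := hIio d₂ hd₂σ
  by_cases hcase : ε / 2 ≤ dist (f (H α)) (f y)
  · exact ⟨H α, y, hvht, lt_of_lt_of_le hv1d₂ hy, hcase⟩
  · refine ⟨H α, z, hvht, lt_of_lt_of_le hv1d₂ hz, ?_⟩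
    push_neg at hcase
    by_contra hc2
    push_neg at hc2
    have htri : dist (f y) (f z) ≤ dist (f y) (f (H α)) + dist (f (H α)) (f z) :=
      dist_triangle _ _ _
    rw [dist_comm (f y) (f (H α))] at htri
    linarith


theorem no_unbounded (hht : HasHeightOmega1 hT) (htop : tT = treeTopology T)
    (hSc : OmegaOneCompactIn S) (hf : Continuous f) (hε : 0 < ε)
    (hUnb : ∀ β, β < ω₁ → ∃ x, IsBad f ε x ∧ β < treeHeight hT x) : False := by
  classical
  have hne : Nonempty (S × S) := by
    obtain ⟨x, ⟨y, z, -⟩, -⟩ := hUnb 0 (Ordinal.omega_pos 1)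
    exact ⟨(y, y)⟩
  set P : Ordinal.{u} → S × S → Prop := fun d p =>
    d < treeHeight hT ((p.1 : T)) ∧ (p.1 : T) < (p.2 : T) ∧
      ε / 2 ≤ dist (f p.1) (f p.2) with hPdef
  have hPex : ∀ d, d < ω₁ → ∃ p, P d p := by
    intro d hd
    obtain ⟨v, g, h1, h2, h3⟩ := inner_supply hT f hht htop hSc hUnb hd
    exact ⟨(v, g), h1, h2, h3⟩
  set F : ∀ α : Ordinal.{u}, (∀ β, β < α → S × S) → S × S := fun α IH =>
    if h : ∃ p, P (Ordinal.bsup α (fun β hβ => treeHeight hT (((IH β hβ).2 : T)) + 1)) p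
    then h.choose else hne.some with hFdef
  set G : Ordinal.{u} → S × S := WellFounded.fix Ordinal.lt_wf F with hGdef
  set δf : Ordinal.{u} → Ordinal.{u} :=
    fun α => Ordinal.bsup α (fun β _ => treeHeight hT (((G β).2 : T)) + 1) with hδfdef
  have hGeq : ∀ α : Ordinal.{u},
      G α = if h : ∃ p, P (δf α) p then h.choose else hne.some := by
    intro α
    have := WellFounded.fix_eq Ordinal.lt_wf F α
    rw [hGdef]
    exact this
  have hδflt : ∀ α, α < ω₁ → δf α < ω₁ := by
    intro α hα
    rw [hδfdef, ← ord_aleph]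
    apply Ordinal.bsup_lt_ord
    · rw [Cardinal.isRegular_aleph_one.cof_eq]
      exact card_lt_of_lt_omega1 hα
    · intro i hi
      rw [ord_aleph]
      exact succ_lt_omega1 (hht.1 _)
  have hGspec : ∀ α, α < ω₁ → P (δf α) (G α) := by
    intro α hα
    rw [hGeq α, dif_pos (hPex (δf α) (hδflt α hα))]
    exact (hPex (δf α) (hδflt α hα)).choose_spec
  have hband : ∀ β α : Ordinal.{u}, β < α →
      treeHeight hT (((G β).2 : T)) < δf α := by
    intro β α h
    have h1 := Ordinal.le_bsup (fun β (_ : β < α) => treeHeight hT (((G β).2 : T)) + 1) β h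
    refine lt_of_lt_of_le ?_ h1
    rw [Ordinal.add_one_eq_succ]
    exact Order.lt_succ _
  have hGht : ∀ α, α < ω₁ → δf α < treeHeight hT (((G α).2 : T)) := by
    intro α hα
    obtain ⟨h1, h2, -⟩ := hGspec α hα
    exact lt_trans h1 (treeHeight_lt_of_lt hT h2)
  have hδfge : ∀ α, α < ω₁ → α ≤ δf α := by
    intro α
    induction α using Ordinal.induction with
    | _ α IH =>
      intro hα
      by_contra hlt
      push_neg at hlt
      have h2 : δf α < δf α :=
        lt_of_le_of_lt (IH (δf α) hlt (lt_trans hlt hα))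
          (lt_trans (hGht (δf α) (lt_trans hlt hα)) (hband (δf α) α hlt))
      exact absurd h2 (lt_irrefl _)
  set E : Set T := {t | ∃ α, α < ω₁ ∧ t = ((G α).2 : T)} with hEdef
  have hES : E ⊆ S := by rintro t ⟨α, -, rfl⟩; exact ((G α).2).2
  have hEunc : ¬ E.Countable := by
    apply unbounded_uncountable hT hht
    intro β hβ
    have hα : β + 1 < ω₁ := succ_lt_omega1 hβ
    refine ⟨(((G (β + 1)).2) : T), ⟨β + 1, hα, rfl⟩, ?_⟩
    refine lt_of_le_of_lt ?_ (lt_of_le_of_lt (hδfge _ hα) (hGht _ hα))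
    rw [Ordinal.add_one_eq_succ]
    exact (Order.lt_succ _).le
  obtain ⟨τ, hτS, ⟨a₀', ha₀'⟩, hprop⟩ := lemmaB hT htop hSc hES hEunc
  -- continuity at τ
  obtain ⟨a₀, ha₀τ, hO⟩ := cont_nbhd hf hT htop hτS ha₀'
    (Metric.isOpen_ball (x := f ⟨τ, hτS⟩) (ε := ε/8))
    (Metric.mem_ball_self (by linarith))
  obtain ⟨e₁, he₁E, hae₁, he₁τ⟩ := hprop a₀ ha₀τ
  obtain ⟨e₂, he₂E, he₁e₂, he₂τ⟩ := hprop e₁ he₁τ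
  obtain ⟨κ, hκ, rfl⟩ := he₁E
  obtain ⟨ι, hι, rfl⟩ := he₂E
  have hht12 : treeHeight hT (((G κ).2 : T)) < treeHeight hT (((G ι).2 : T)) :=
    treeHeight_lt_of_lt hT he₁e₂
  have hκι : κ < ι := by
    by_contra hle
    push_neg at hle
    rcases eq_or_lt_of_le hle with rfl | hlt
    · exact absurd hht12 (lt_irrefl _)
    · exact absurd (lt_trans hht12 (lt_trans (hband ι κ hlt) (hGht κ hκ))) (lt_irrefl _)
  obtain ⟨hs1, hs2, hs3⟩ := hGspec ι hι
  -- (G ι).1 is between a₀ and τ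
  have hv_lt_τ : ((G ι).1 : T) < τ := lt_trans hs2 he₂τ
  have hva : a₀ < ((G ι).1 : T) := by
    apply lt_of_treeHeight_lt hT ha₀τ.le hv_lt_τ.le
    calc treeHeight hT a₀ < treeHeight hT (((G κ).2 : T)) := treeHeight_lt_of_lt hT hae₁
      _ < δf ι := hband κ ι hκι
      _ < treeHeight hT (((G ι).1 : T)) := hs1
  have hfv : f (G ι).1 ∈ Metric.ball (f ⟨τ, hτS⟩) (ε/8) := by
    have := hO ((G ι).1 : T) ((G ι).1).2 hva hv_lt_τ.le
    simpa using this
  have hfg : f (G ι).2 ∈ Metric.ball (f ⟨τ, hτS⟩) (ε/8) := by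
    have := hO ((G ι).2 : T) ((G ι).2).2 (lt_trans hae₁ he₁e₂) he₂τ.le
    simpa using this
  rw [Metric.mem_ball] at hfv hfg
  have htri : dist (f (G ι).1) (f (G ι).2) ≤
      dist (f (G ι).1) (f ⟨τ, hτS⟩) + dist (f ⟨τ, hτS⟩) (f (G ι).2) := dist_triangle _ _ _
  rw [dist_comm (f ⟨τ, hτS⟩) (f (G ι).2)] at htri
  linarith

end Machine

end S15

/-- Let S be an uncountable ω₁-compact subspace of a (Hausdorff) tree T of
height ω₁ and f : S → Y continuous with Y metrizable. Then there is β < ω₁ such that f is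
constant on S(x) = {y ∈ S : y ≥ x} whenever x has height at least β. In particular f has
countable image. -/
theorem eventually_constant_on_cones {T : Type u} [PartialOrder T]
    [tT : TopologicalSpace T] (htop : tT = treeTopology T)
    (hT : IsTreeOrder T) (hH : IsHausdorffTree T) (hht : HasHeightOmega1 hT)
    (S : Set T) (hSu : ¬S.Countable) (hSc : OmegaOneCompactIn S)
    (Y : Type v) [TopologicalSpace Y] [TopologicalSpace.MetrizableSpace Y]
    (f : S → Y) (hf : Continuous f) :
    (∃ β < ω₁, ∀ x : T, β ≤ treeHeight hT x →
      ∀ (y z : T) (hy : y ∈ S) (hz : z ∈ S), x ≤ y → x ≤ z →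
        f ⟨y, hy⟩ = f ⟨z, hz⟩) ∧
    (Set.range f).Countable := by
  classical
  letI : MetricSpace Y := TopologicalSpace.metrizableSpaceMetric Y
  have hf' : Continuous f := hf
  -- Part 1: for every n, the set of (1/(n+1))-bad points is bounded in height
  have hbdd : ∀ n : ℕ, ∃ b, b < ω₁ ∧
      ∀ x, S15.IsBad f (1 / ((n : ℝ) + 1)) x → treeHeight hT x ≤ b := by
    intro n
    by_contra hcon
    push_neg at hcon
    have hεpos : (0 : ℝ) < 1 / ((n : ℝ) + 1) := by positivity
    refine S15.no_unbounded hT f hht htop hSc hf' hεpos ?_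
    intro β hβ
    obtain ⟨x, h1, h2⟩ := hcon β hβ
    exact ⟨x, h1, h2⟩
  choose b hb1 hb2 using hbdd
  have hsup : (⨆ n, b n) + 1 < ω₁ := S15.succ_lt_omega1 (S15.nat_sup_lt_omega1 b hb1)
  set β := (⨆ n, b n) + 1 with hβdef
  have part1 : ∀ x : T, β ≤ treeHeight hT x →
      ∀ (y z : T) (hy : y ∈ S) (hz : z ∈ S), x ≤ y → x ≤ z →
        f ⟨y, hy⟩ = f ⟨z, hz⟩ := by
    intro x hx y z hy hz hxy hxz
    have hd0 : dist (f ⟨y, hy⟩) (f ⟨z, hz⟩) ≤ 0 := by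
      by_contra hpos
      push_neg at hpos
      obtain ⟨n, hn⟩ := exists_nat_one_div_lt hpos
      have hxb : treeHeight hT x ≤ b n := hb2 n x ⟨⟨y, hy⟩, ⟨z, hz⟩, hxy, hxz, hn⟩
      have hlt : treeHeight hT x < β := by
        refine lt_of_le_of_lt hxb ?_
        calc b n ≤ ⨆ n, b n := Ordinal.le_iSup b n
          _ < β := by rw [hβdef, Ordinal.add_one_eq_succ]; exact Order.lt_succ _
      exact absurd hlt (not_lt.mpr hx)
    exact dist_le_zero.mp hd0
  refine ⟨⟨β, hsup, part1⟩, ?_⟩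
  -- Part 2: the range of f is countable
  have antichain_cnt : ∀ A : Set T, A ⊆ S → (∀ a ∈ A, ∀ c ∈ A, ¬ a < c) → A.Countable := by
    intro A hAS hanti
    by_contra hA
    obtain ⟨τ, hτS, ⟨a0, ha0⟩, hp⟩ := S15.lemmaB hT htop hSc hAS hA
    obtain ⟨d₁, hd₁, h1, h2⟩ := hp a0 ha0
    obtain ⟨d₂, hd₂, h3, h4⟩ := hp d₁ h2
    exact hanti d₁ hd₁ d₂ hd₂ h3
  have level_cnt : ∀ α : Ordinal.{u}, ({t | t ∈ S ∧ treeHeight hT t = α}).Countable := by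
    intro α
    refine antichain_cnt _ (fun t ht => ht.1) ?_
    rintro a ⟨-, ha⟩ c ⟨-, hc⟩ hac
    have hlt := S15.treeHeight_lt_of_lt hT hac
    rw [ha, hc] at hlt
    exact absurd hlt (lt_irrefl _)
  have low_cnt : ({t | t ∈ S ∧ treeHeight hT t < β}).Countable := by
    have hcov : {t | t ∈ S ∧ treeHeight hT t < β}
        = ⋃ α ∈ Set.Iio β, {t | t ∈ S ∧ treeHeight hT t = α} := by
      ext t
      simp only [Set.mem_setOf_eq, Set.mem_iUnion, Set.mem_Iio]
      constructor
      · rintro ⟨h1, h2⟩; exact ⟨treeHeight hT t, h2, h1, rfl⟩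
      · rintro ⟨α, hα, h1, rfl⟩; exact ⟨h1, hα⟩
    rw [hcov]
    refine Set.Countable.biUnion ?_ (fun α _ => level_cnt α)
    rw [Cardinal.countable_iff_lt_aleph_one, Ordinal.mk_Iio_ordinal]
    rw [Cardinal.lift_lt_aleph_one]
    exact S15.card_lt_of_lt_omega1 hsup
  set X : Set T := {x | treeHeight hT x = β ∧ ∃ s ∈ S, x ≤ s} with hXdef
  have hwit : ∀ x : X, ∃ s, s ∈ S ∧ (x : T) ≤ s := by
    rintro ⟨x, -, hx⟩
    obtain ⟨s, hs1, hs2⟩ := hx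
    exact ⟨s, hs1, hs2⟩
  choose w hwS hwle using hwit
  have hXht : ∀ x : X, treeHeight hT (x : T) = β := fun x => x.2.1
  have hwanti : ∀ x₁ x₂ : X, ¬ w x₁ < w x₂ := by
    intro x₁ x₂ hlt
    have hc1 : (x₁ : T) ≤ w x₂ := le_trans (hwle x₁) hlt.le
    have heq : (x₁ : T) = (x₂ : T) :=
      S15.eq_of_treeHeight_eq hT hc1 (hwle x₂) (by rw [hXht x₁, hXht x₂])
    have hx12 : x₁ = x₂ := Subtype.ext heq
    rw [hx12] at hlt
    exact absurd hlt (lt_irrefl _)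
  have hXcnt : X.Countable := by
    have hrange : (Set.range (fun x : X => w x)).Countable := by
      refine antichain_cnt _ ?_ ?_
      · rintro t ⟨x, rfl⟩; exact hwS x
      · rintro a ⟨x₁, rfl⟩ c ⟨x₂, rfl⟩ h
        exact hwanti x₁ x₂ h
    have hinj : Function.Injective (fun x : X => (⟨w x, Set.mem_range_self x⟩ :
        Set.range (fun x : X => w x))) := by
      intro x₁ x₂ h
      have hw : w x₁ = w x₂ := congrArg Subtype.val h
      apply Subtype.ext
      exact S15.eq_of_treeHeight_eq hT (hw ▸ hwle x₁) (hwle x₂)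
        (by rw [hXht x₁, hXht x₂])
    haveI := hrange.to_subtype
    haveI : Countable X := hinj.countable
    exact Set.countable_coe_iff.mp this
  have hcover : Set.range f ⊆
      (f '' {p : S | treeHeight hT (p : T) < β}) ∪
      Set.range (fun x : X => f ⟨w x, hwS x⟩) := by
    rintro yv ⟨p, rfl⟩
    by_cases hp : treeHeight hT (p : T) < β
    · exact Or.inl ⟨p, hp, rfl⟩
    · push_neg at hp
      right
      rcases eq_or_lt_of_le hp with heq | hlt
      · have hx'm : (p : T) ∈ X := ⟨heq.symm, ⟨(p : T), p.2, le_refl _⟩⟩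
        refine ⟨⟨(p : T), hx'm⟩, ?_⟩
        exact part1 (p : T) hp (w ⟨(p : T), hx'm⟩) (p : T) (hwS ⟨(p : T), hx'm⟩) p.2
          (hwle ⟨(p : T), hx'm⟩) (le_refl _)
      · obtain ⟨x, hxp, hxht⟩ := S15.exists_pred_of_lt hT hlt
        have hx'm : x ∈ X := ⟨hxht, ⟨(p : T), p.2, hxp.le⟩⟩
        refine ⟨⟨x, hx'm⟩, ?_⟩
        exact part1 x hxht.symm.le (w ⟨x, hx'm⟩) (p : T) (hwS ⟨x, hx'm⟩) p.2
          (hwle ⟨x, hx'm⟩) hxp.le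
  refine Set.Countable.mono hcover (Set.Countable.union ?_ ?_)
  · refine Set.Countable.image ?_ f
    have hpre : {p : S | treeHeight hT (p : T) < β}
        = Subtype.val ⁻¹' {t | t ∈ S ∧ treeHeight hT t < β} := by
      ext p
      simp [p.2]
    rw [hpre]
    exact low_cnt.preimage Subtype.val_injective
  · haveI := hXcnt.to_subtype
    exact Set.countable_range _
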